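/- (DFT-based polyphase standard sets form a complete complementary code.) Let M ≥ 2, K ≥ 1, w = e^{2πi/M} ∈ ℂ, and let π be a permutation of {0,…,K−1}. For r, s ∈ {0,…,M−1} and n ∈ {0,…,M^K−1}, define x_s^{(r)}(n) = w^{μ_{r,s}(n)} with μ_{r,s}(n) = r·d_{π(0)}(n) + ∑_{k=1}^{K−1} d_{π(k−1)}(n)·d_{π(k)}(n) + d_{π(K−1)}(n)·s, where d_k(n) denotes the k-th digit of the radix-M expansion of n; extend each x_s^{(r)} by zero outside {0,…,M^K−1}. Then: (i) for each fixed r, the M sequences x_0^{(r)}, …, x_{M−1}^{(r)} form a complementary set: for every nonzero integer k, ∑_{s=0}^{M−1} ∑_{n} x_s^{(r)}(n)·conj(x_s^{(r)}(n+k)) = 0; and (ii) for r ≠ r' and every integer k, ∑_{s=0}^{M−1} ∑_{n} conj(x_s^{(r)}(n))·x_s^{(r')}(n+k) = 0. Hence the M sets indexed by r form a complete complementary code of M sets of M sequences of length M^K. -/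

import Mathlib

/-- The `k`-th digit of the radix-`M` expansion of `n`. -/
def dig (M k n : ℕ) : ℕ := n / M ^ k % M

namespace CCC
open Finset

variable {M K : ℕ}

def ext {M K : ℕ} (b : Fin K → Fin M) (q : ℕ) : ℕ :=
  if h : q < K then (b ⟨q, h⟩ : ℕ) else 0

def enc {M K : ℕ} (b : Fin K → Fin M) : ℕ := ∑ p ∈ range K, ext b p * M ^ p

lemma ext_lt (hM : 0 < M) (b : Fin K → Fin M) (q : ℕ) : ext b q < M := by
  unfold ext; split
  · exact (b _).is_lt
  · exact hM

lemma ext_eq (b : Fin K → Fin M) {q : ℕ} (h : q < K) : ext b q = b ⟨q, h⟩ := by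
  simp [ext, h]

lemma ext_update (b : Fin K → Fin M) (i : Fin K) (t : Fin M) (q : ℕ) :
    ext (Function.update b i t) q = if q = (i : ℕ) then (t : ℕ) else ext b q := by
  unfold ext
  split
  · rename_i h
    by_cases hq : q = (i : ℕ)
    · have he : (⟨q, h⟩ : Fin K) = i := Fin.ext hq
      rw [he, Function.update_self, if_pos hq]
    · have he : (⟨q, h⟩ : Fin K) ≠ i := by simpa [Fin.ext_iff] using hq
      simp [Function.update_of_ne he, hq]
  · rename_i h
    have hq : q ≠ (i : ℕ) := by rintro rfl; exact h i.is_lt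
    simp [hq]

lemma dig_lt (hM : 0 < M) (q n : ℕ) : dig M q n < M := Nat.mod_lt _ hM

lemma sum_lt_pow (hM : 0 < M) (c : ℕ → ℕ) (hc : ∀ p, c p < M) (K : ℕ) :
    ∑ p ∈ range K, c p * M ^ p < M ^ K := by
  induction K with
  | zero => simp
  | succ K ih =>
    rw [Finset.sum_range_succ, pow_succ]
    calc ∑ p ∈ range K, c p * M ^ p + c K * M ^ K
        < M ^ K + c K * M ^ K := by omega
      _ = (c K + 1) * M ^ K := by ring
      _ ≤ M * M ^ K := Nat.mul_le_mul_right _ (hc K)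
      _ = M ^ K * M := by ring

lemma dig_sum (hM : 0 < M) (c : ℕ → ℕ) (hc : ∀ p, c p < M) (K q : ℕ) (hq : q < K) :
    dig M q (∑ p ∈ range K, c p * M ^ p) = c q := by
  have hq1 : q + 1 ≤ K := hq
  have hsplit : ∑ p ∈ range K, c p * M ^ p
      = (∑ p ∈ range (q+1), c p * M ^ p) + ∑ p ∈ Ico (q+1) K, c p * M ^ p := by
    simp only [Finset.range_eq_Ico]
    exact (Finset.sum_Ico_consecutive _ (Nat.zero_le _) hq1).symm
  have hdvd : M ^ (q+1) ∣ ∑ p ∈ Ico (q+1) K, c p * M ^ p := by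
    apply Finset.dvd_sum
    intro p hp
    exact Dvd.dvd.mul_left (pow_dvd_pow M (Finset.mem_Ico.1 hp).1) _
  obtain ⟨B, hB⟩ := hdvd
  have hlo : ∑ p ∈ range q, c p * M ^ p < M ^ q := sum_lt_pow hM c hc q
  rw [hsplit, hB, Finset.sum_range_succ, dig]
  have hMq : 0 < M ^ q := Nat.pow_pos hM
  have h2 : (∑ p ∈ range q, c p * M ^ p) + c q * M ^ q + M ^ (q+1) * B
      = (∑ p ∈ range q, c p * M ^ p) + (c q + M * B) * M ^ q := by ring
  rw [h2, Nat.add_mul_div_right _ _ hMq, Nat.div_eq_of_lt hlo]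
  simp [Nat.add_mul_mod_self_left, Nat.mod_eq_of_lt (hc q)]

lemma dig_enc (hM : 0 < M) (b : Fin K → Fin M) {q : ℕ} (hq : q < K) :
    dig M q (enc b) = ext b q :=
  dig_sum hM _ (ext_lt hM b) K q hq

def dec (hM : 0 < M) (K : ℕ) (n : ℕ) : Fin K → Fin M :=
  fun j => ⟨dig M (j : ℕ) n, dig_lt hM _ _⟩

lemma dec_enc (hM : 0 < M) (b : Fin K → Fin M) : dec hM K (enc b) = b := by
  funext j
  apply Fin.ext
  show dig M (j : ℕ) (enc b) = b j
  rw [dig_enc hM b j.is_lt, ext_eq b j.is_lt]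

lemma enc_lt (hM : 0 < M) (b : Fin K → Fin M) : enc b < M ^ K :=
  sum_lt_pow hM _ (ext_lt hM b) K

lemma enc_dec (hM : 0 < M) {n : ℕ} (hn : n < M ^ K) : enc (dec hM K n) = n := by
  have h1 : enc (dec hM K n) = ∑ p ∈ range K, dig M p n * M ^ p := by
    apply Finset.sum_congr rfl
    intro p hp
    rw [ext_eq _ (Finset.mem_range.1 hp)]
    rfl
  rw [h1]
  -- ∑ dig = n % M^K = n
  have h2 : ∀ (m : ℕ), ∑ p ∈ range m, dig M p n * M ^ p = n % M ^ m := by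
    intro m
    induction m with
    | zero => simp [Nat.mod_one]
    | succ m ih =>
      rw [Finset.sum_range_succ, ih, dig, pow_succ, Nat.mod_mul]
      ring
  rw [h2 K, Nat.mod_eq_of_lt hn]

lemma enc_injective (hM : 0 < M) : Function.Injective (enc (M := M) (K := K)) := by
  intro b b' h
  have := congrArg (dec hM K) h
  rwa [dec_enc, dec_enc] at this

lemma enc_update (hM : 0 < M) (b : Fin K → Fin M) (i : Fin K) (t : Fin M) :
    enc (Function.update b i t) + (b i : ℕ) * M ^ (i : ℕ)
      = enc b + (t : ℕ) * M ^ (i : ℕ) := by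
  have hi : (i : ℕ) ∈ range K := Finset.mem_range.2 i.is_lt
  have key : ∀ (f : Fin K → Fin M),
      enc f = (∑ p ∈ range K \ {(i : ℕ)}, ext f p * M ^ p) + ext f (i : ℕ) * M ^ (i : ℕ) :=
    fun f => Finset.sum_eq_sum_sdiff_singleton_add hi _
  rw [key, key b]
  have hsame : ∑ p ∈ range K \ {(i : ℕ)}, ext (Function.update b i t) p * M ^ p
      = ∑ p ∈ range K \ {(i : ℕ)}, ext b p * M ^ p := by
    apply Finset.sum_congr rfl
    intro p hp
    have hpne : p ≠ (i : ℕ) := by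
      have := (Finset.mem_sdiff.1 hp).2
      simpa using this
    rw [ext_update, if_neg hpne]
  rw [hsame, ext_update, if_pos rfl, ext_eq b i.is_lt]
  simp only [Fin.eta]
  ring


variable {M : ℕ} {w : ℂ}

lemma zsum (hM : M ≠ 0) (hprim : IsPrimitiveRoot w M) {c : ℤ} (hc : ¬ ((M : ℤ) ∣ c)) :
    ∑ s : Fin M, w ^ (c * (s : ℕ)) = 0 := by
  have hw0 : w ≠ 0 := hprim.ne_zero hM
  set u : ℂ := w ^ c with hu
  have hterm : ∀ s : ℕ, w ^ (c * (s : ℕ)) = u ^ s := by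
    intro s
    rw [hu, ← zpow_natCast (w ^ c) s, ← zpow_mul]
  have h1 : ∑ s : Fin M, w ^ (c * (s : ℕ)) = ∑ s ∈ range M, u ^ s := by
    rw [← Fin.sum_univ_eq_sum_range (fun s => u ^ s) M]
    exact Finset.sum_congr rfl fun s _ => hterm s
  have hu1 : u ≠ 1 := by
    intro h
    exact hc (((hprim.zpow_eq_one_iff_dvd c).1 h))
  have huM : u ^ M = 1 := by
    rw [hu, ← zpow_natCast (w ^ c) M, ← zpow_mul, mul_comm, zpow_mul,
      zpow_natCast, hprim.pow_eq_one, one_zpow]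
  rw [h1, geom_sum_eq hu1, huM, sub_self, zero_div]

/-- Abstract orbit-summation lemma. -/
lemma orbit_sum_zero {β : Type*} [DecidableEq β] [NeZero M]
    (hM : M ≠ 0) (hprim : IsPrimitiveRoot w M)
    (S : Finset β) (u : Fin M → β → β) (c : β → ℤ) (f : β → ℂ)
    (h1 : ∀ b ∈ S, ∀ t, u t b ∈ S)
    (h2 : ∀ b ∈ S, ∀ t t', u t (u t' b) = u t b)
    (h3 : ∀ b ∈ S, ∀ t t', u t b = u t' b → t = t')
    (h4 : ∀ b ∈ S, ∃ t, u t b = b)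
    (h5 : ∀ b ∈ S, ∀ t, f (u t b) = f (u 0 b) * w ^ (c b * (t : ℕ)))
    (h6 : ∀ b ∈ S, ¬ ((M : ℤ) ∣ c b)) :
    ∑ b ∈ S, f b = 0 := by
  rw [← Finset.sum_fiberwise_of_maps_to (g := fun b => u 0 b) (fun b hb => h1 b hb 0) f]
  apply Finset.sum_eq_zero
  intro y hy
  rcases Finset.eq_empty_or_nonempty (S.filter (fun b => u 0 b = y)) with he | hne
  · rw [he, Finset.sum_empty]
  obtain ⟨b₀, hb₀⟩ := hne
  rw [Finset.mem_filter] at hb₀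
  obtain ⟨hb₀S, hb₀y⟩ := hb₀
  have hyS : y ∈ S := hb₀y ▸ h1 b₀ hb₀S 0
  have hy0 : u 0 y = y := by
    rw [← hb₀y, h2 b₀ hb₀S 0 0]
  have hfib : S.filter (fun b => u 0 b = y) = Finset.image (fun t => u t y) Finset.univ := by
    ext b
    simp only [Finset.mem_filter, Finset.mem_image, Finset.mem_univ, true_and]
    constructor
    · rintro ⟨hbS, hb⟩
      obtain ⟨t, ht⟩ := h4 b hbS
      exact ⟨t, by rw [← hb, h2 b hbS t 0, ht]⟩
    · rintro ⟨t, rfl⟩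
      have hmem : u t y ∈ S := h1 y hyS t
      refine ⟨hmem, ?_⟩
      rw [h2 y hyS 0 t, hy0]
  rw [hfib, Finset.sum_image (fun t _ t' _ h => h3 y hyS t t' h)]
  have : ∀ t : Fin M, f (u t y) = f (u 0 y) * w ^ (c y * (t : ℕ)) := h5 y hyS
  rw [Finset.sum_congr rfl (fun t _ => this t), ← Finset.mul_sum,
    zsum hM hprim (h6 y hyS), mul_zero]


/-- The exponent function in chain coordinates. -/
def expo (σ : ℕ → ℕ) {M K : ℕ} (r : ℕ) (b : Fin K → Fin M) (s : ℕ) : ℕ :=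
  r * ext b (σ 0) + (∑ m ∈ Finset.Ico 1 K, ext b (σ (m - 1)) * ext b (σ m)) +
    ext b (σ (K - 1)) * s

/-- largest chain index (≤ K-1) where the two digit vectors differ. -/
def maxd (σ : ℕ → ℕ) {M K : ℕ} (p : (Fin K → Fin M) × (Fin K → Fin M)) : ℕ :=
  Nat.findGreatest (fun i => ext p.1 (σ i) ≠ ext p.2 (σ i)) (K - 1)

def posn (σ : ℕ → ℕ) {M K : ℕ} (hK : 0 < K) (p : (Fin K → Fin M) × (Fin K → Fin M)) :
    Fin K :=
  if h : σ (maxd σ p + 1) < K then ⟨σ (maxd σ p + 1), h⟩ else ⟨0, hK⟩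

def uu (σ : ℕ → ℕ) {M K : ℕ} (hK : 0 < K) (t : Fin M)
    (p : (Fin K → Fin M) × (Fin K → Fin M)) : (Fin K → Fin M) × (Fin K → Fin M) :=
  (Function.update p.1 (posn σ hK p) t, Function.update p.2 (posn σ hK p) t)

lemma findGreatest_congr {P Q : ℕ → Prop} [DecidablePred P] [DecidablePred Q]
    (h : ∀ i, P i ↔ Q i) (b : ℕ) : Nat.findGreatest P b = Nat.findGreatest Q b := by
  induction b with
  | zero => rfl
  | succ b ih =>
    rw [Nat.findGreatest_succ, Nat.findGreatest_succ, ih]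
    by_cases hb : P (b + 1)
    · rw [if_pos hb, if_pos ((h _).1 hb)]
    · rw [if_neg hb, if_neg (fun hq => hb ((h _).2 hq))]

lemma expo_s (σ : ℕ → ℕ) (r : ℕ) (b : Fin K → Fin M) (s : ℕ) :
    expo σ r b s = expo σ r b 0 + ext b (σ (K - 1)) * s := by
  simp [expo]



section SFacts

def Sset (σ : ℕ → ℕ) (M K : ℕ) (k : ℤ) : Finset ((Fin K → Fin M) × (Fin K → Fin M)) :=
  Finset.univ.filter (fun p => ((enc p.2 : ℕ) : ℤ) = ((enc p.1 : ℕ) : ℤ) + k ∧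
    ext p.1 (σ (K - 1)) = ext p.2 (σ (K - 1)))

variable {M K : ℕ} {σ : ℕ → ℕ} {k : ℤ}

lemma mem_Sset {p : (Fin K → Fin M) × (Fin K → Fin M)} :
    p ∈ Sset σ M K k ↔ ((enc p.2 : ℕ) : ℤ) = ((enc p.1 : ℕ) : ℤ) + k ∧
      ext p.1 (σ (K - 1)) = ext p.2 (σ (K - 1)) := by
  simp [Sset]

lemma maxd_facts (hM0 : 0 < M) (hK0 : 0 < K)
    (hσ : Set.BijOn σ (Set.Iio K) (Set.Iio K)) (hk : k ≠ 0)
    {p : (Fin K → Fin M) × (Fin K → Fin M)} (hp : p ∈ Sset σ M K k) :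
    ext p.1 (σ (maxd σ p)) ≠ ext p.2 (σ (maxd σ p)) ∧ maxd σ p + 1 < K ∧
      (∀ i, maxd σ p < i → i < K → ext p.1 (σ i) = ext p.2 (σ i)) := by
  obtain ⟨hP, hΔ⟩ := mem_Sset.1 hp
  -- p.1 ≠ p.2
  have hne : p.1 ≠ p.2 := by
    intro h
    rw [h] at hP
    omega
  -- a differing chain index
  obtain ⟨j0, hj0ne⟩ := Function.ne_iff.1 hne
  obtain ⟨i, hiK, hσi⟩ : ∃ i, i ∈ Set.Iio K ∧ σ i = (j0 : ℕ) := hσ.surjOn j0.is_lt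
  have hiK' : i < K := hiK
  have hsiK : σ i < K := hσi ▸ j0.is_lt
  have hDi : ext p.1 (σ i) ≠ ext p.2 (σ i) := by
    have h1 : (⟨σ i, hsiK⟩ : Fin K) = j0 := Fin.ext hσi
    rw [ext_eq p.1 hsiK, ext_eq p.2 hsiK, h1]
    exact fun hh => hj0ne (Fin.val_injective hh)
  have hspec : ext p.1 (σ (maxd σ p)) ≠ ext p.2 (σ (maxd σ p)) :=
    Nat.findGreatest_spec (P := fun i => ext p.1 (σ i) ≠ ext p.2 (σ i)) (m := i)
      (n := K - 1) (by omega) hDi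
  have hle : maxd σ p ≤ K - 1 := Nat.findGreatest_le _
  have hneK1 : maxd σ p ≠ K - 1 := by
    intro h
    rw [h] at hspec
    exact hspec hΔ
  refine ⟨hspec, by omega, ?_⟩
  intro i' hgt hi'K
  by_contra hcon
  exact Nat.findGreatest_is_greatest hgt (by omega) hcon

lemma posn_eq (hK0 : 0 < K) {p : (Fin K → Fin M) × (Fin K → Fin M)}
    (hσlt : σ (maxd σ p + 1) < K) :
    posn σ hK0 p = ⟨σ (maxd σ p + 1), hσlt⟩ := by
  rw [posn, dif_pos]

lemma uu_facts (hM0 : 0 < M) (hK0 : 0 < K)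
    (hσ : Set.BijOn σ (Set.Iio K) (Set.Iio K)) (hk : k ≠ 0)
    {p : (Fin K → Fin M) × (Fin K → Fin M)} (hp : p ∈ Sset σ M K k) (t : Fin M) :
    maxd σ (uu σ hK0 t p) = maxd σ p ∧ uu σ hK0 t p ∈ Sset σ M K k ∧
      p.1 (posn σ hK0 p) = p.2 (posn σ hK0 p) := by
  obtain ⟨hP, hΔ⟩ := mem_Sset.1 hp
  obtain ⟨hdiff, hj1, hgt⟩ := maxd_facts hM0 hK0 hσ hk hp
  set j := maxd σ p with hj
  have hσj1 : σ (j + 1) < K := hσ.mapsTo hj1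
  have hpos : posn σ hK0 p = ⟨σ (j + 1), hσj1⟩ := posn_eq hK0 hσj1
  have hposval : (posn σ hK0 p : ℕ) = σ (j + 1) := by rw [hpos]
  -- digits agree at the updated position
  have hagext : ext p.1 (σ (j + 1)) = ext p.2 (σ (j + 1)) := hgt _ (Nat.lt_succ_self j) hj1
  have hagree : p.1 (posn σ hK0 p) = p.2 (posn σ hK0 p) := by
    apply Fin.val_injective
    have e1 := ext_eq p.1 hσj1
    have e2 := ext_eq p.2 hσj1
    rw [hpos]
    rw [e1, e2] at hagext
    exact_mod_cast hagext
  -- Dpred invariance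
  have hDinv : ∀ i, (ext (uu σ hK0 t p).1 (σ i) ≠ ext (uu σ hK0 t p).2 (σ i)) ↔
      (ext p.1 (σ i) ≠ ext p.2 (σ i)) := by
    intro i
    show (ext (Function.update p.1 (posn σ hK0 p) t) (σ i) ≠
      ext (Function.update p.2 (posn σ hK0 p) t) (σ i)) ↔ _
    rw [ext_update, ext_update, hposval]
    by_cases hc : σ i = σ (j + 1)
    · rw [if_pos hc, if_pos hc]
      have : ext p.1 (σ i) = ext p.2 (σ i) := by rw [hc]; exact hagext
      simp [this]
    · rw [if_neg hc, if_neg hc]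
  have hmaxd : maxd σ (uu σ hK0 t p) = maxd σ p := findGreatest_congr hDinv (K - 1)
  refine ⟨hmaxd, ?_, hagree⟩
  -- membership
  rw [mem_Sset]
  constructor
  · -- enc relation
    show ((enc (Function.update p.2 (posn σ hK0 p) t) : ℕ) : ℤ) =
      ((enc (Function.update p.1 (posn σ hK0 p) t) : ℕ) : ℤ) + k
    have e1 := enc_update hM0 p.1 (posn σ hK0 p) t
    have e2 := enc_update hM0 p.2 (posn σ hK0 p) t
    rw [hagree] at e1
    have e1' : ((enc (Function.update p.1 (posn σ hK0 p) t) : ℕ) : ℤ) +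
        ((p.2 (posn σ hK0 p) : ℕ) : ℤ) * (M : ℤ) ^ ((posn σ hK0 p : ℕ)) =
        ((enc p.1 : ℕ) : ℤ) + ((t : ℕ) : ℤ) * (M : ℤ) ^ ((posn σ hK0 p : ℕ)) := by
      exact_mod_cast congrArg (Nat.cast : ℕ → ℤ) e1
    have e2' : ((enc (Function.update p.2 (posn σ hK0 p) t) : ℕ) : ℤ) +
        ((p.2 (posn σ hK0 p) : ℕ) : ℤ) * (M : ℤ) ^ ((posn σ hK0 p : ℕ)) =
        ((enc p.2 : ℕ) : ℤ) + ((t : ℕ) : ℤ) * (M : ℤ) ^ ((posn σ hK0 p : ℕ)) := by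
      exact_mod_cast congrArg (Nat.cast : ℕ → ℤ) e2
    linarith [e1', e2', hP]
  · -- last-digit equality
    show ext (Function.update p.1 (posn σ hK0 p) t) (σ (K - 1)) =
      ext (Function.update p.2 (posn σ hK0 p) t) (σ (K - 1))
    rw [ext_update, ext_update, hposval]
    by_cases hc : σ (K - 1) = σ (j + 1)
    · rw [if_pos hc, if_pos hc]
    · rw [if_neg hc, if_neg hc]
      exact hΔ

lemma A_update [NeZero M] (hM0 : 0 < M) (hK0 : 0 < K)
    (hσ : Set.BijOn σ (Set.Iio K) (Set.Iio K)) (hk : k ≠ 0)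
    {p : (Fin K → Fin M) × (Fin K → Fin M)} (hp : p ∈ Sset σ M K k) (r r' : ℕ)
    (t : Fin M) :
    ((expo σ r' (uu σ hK0 t p).2 0 : ℕ) : ℤ) - ((expo σ r (uu σ hK0 t p).1 0 : ℕ) : ℤ)
      = (((expo σ r' (uu σ hK0 0 p).2 0 : ℕ) : ℤ) -
          ((expo σ r (uu σ hK0 0 p).1 0 : ℕ) : ℤ))
        + ((ext p.2 (σ (maxd σ p)) : ℤ) - (ext p.1 (σ (maxd σ p)) : ℤ)) * ((t : ℕ) : ℤ) := by
  obtain ⟨hdiff, hj1, hgt⟩ := maxd_facts hM0 hK0 hσ hk hp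
  set j := maxd σ p with hj
  have hσj1 : σ (j + 1) < K := hσ.mapsTo hj1
  have hpos : posn σ hK0 p = ⟨σ (j + 1), hσj1⟩ := posn_eq hK0 hσj1
  have hposval : (posn σ hK0 p : ℕ) = σ (j + 1) := by rw [hpos]
  set pos := posn σ hK0 p with hposdef
  set G : Fin M → ℕ → ℤ := fun t m =>
    (ext (Function.update p.2 pos t) (σ (m - 1)) : ℤ) * (ext (Function.update p.2 pos t) (σ m) : ℤ)
    - (ext (Function.update p.1 pos t) (σ (m - 1)) : ℤ) * (ext (Function.update p.1 pos t) (σ m) : ℤ)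
    with hG
  have hinj : ∀ i i', i < K → i' < K → σ i = σ i' → i = i' := by
    intro i i' hi hi' hσe
    exact hσ.injOn hi hi' hσe
  have hs0 : ∀ (b : Fin K → Fin M) (u : Fin M),
      ext (Function.update b pos u) (σ 0) = ext b (σ 0) := by
    intro b u
    rw [ext_update, hposval, if_neg]
    intro hc
    have := hinj 0 (j + 1) hK0 hj1 hc
    omega
  have hA : ∀ u : Fin M,
      ((expo σ r' (uu σ hK0 u p).2 0 : ℕ) : ℤ) - ((expo σ r (uu σ hK0 u p).1 0 : ℕ) : ℤ)
      = ((r' : ℤ) * (ext p.2 (σ 0) : ℤ) - (r : ℤ) * (ext p.1 (σ 0) : ℤ))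
        + ∑ m ∈ Finset.Ico 1 K, G u m := by
    intro u
    show ((expo σ r' (Function.update p.2 pos u) 0 : ℕ) : ℤ)
      - ((expo σ r (Function.update p.1 pos u) 0 : ℕ) : ℤ) = _
    unfold expo
    rw [hs0 p.1 u, hs0 p.2 u]
    push_cast
    rw [hG]
    rw [Finset.sum_sub_distrib]
    ring
  rw [hA t, hA 0]
  have claim2 : ∀ m ∈ Finset.Ico 1 K, G t m = G 0 m +
      (if m = j + 1 then ((ext p.2 (σ j) : ℤ) - (ext p.1 (σ j) : ℤ)) * ((t : ℕ) : ℤ) else 0) := by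
    intro m hm
    obtain ⟨hm1, hmK⟩ := Finset.mem_Ico.1 hm
    by_cases h1 : m = j + 1
    · subst h1
      have hjm : j + 1 - 1 = j := by omega
      have hσjne : σ j ≠ σ (j + 1) := by
        intro hc
        have hjK : j < K := by omega
        have := hinj j (j + 1) hjK hj1 hc
        omega
      simp only [hG]
      simp only [hjm]
      simp only [ext_update, hposval, if_neg hσjne, if_pos rfl]
      simp only [Fin.val_zero, Nat.cast_zero]
      push_cast
      ring
    · rw [if_neg h1]
      have hσmne : σ m ≠ σ (j + 1) := by
        intro hc
        exact h1 (hinj m (j + 1) hmK hj1 hc)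
      by_cases h3 : σ (m - 1) = σ (j + 1)
      · have hm1K : m - 1 < K := by omega
        have : m - 1 = j + 1 := hinj (m - 1) (j + 1) hm1K hj1 h3
        have hmj2 : m = j + 2 := by omega
        have hmgt : ext p.1 (σ m) = ext p.2 (σ m) := hgt m (by omega) hmK
        simp only [hG]
        simp only [ext_update, hposval]
        simp only [if_pos h3, if_neg hσmne, hmgt]
        simp only [Fin.val_zero, Nat.cast_zero]
        ring
      · simp only [hG]
        simp only [ext_update, hposval]
        simp only [if_neg h3, if_neg hσmne]
        ring
  rw [Finset.sum_congr rfl claim2, Finset.sum_add_distrib, Finset.sum_ite_eq' (Finset.Ico 1 K) (j + 1)]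
  rw [if_pos (Finset.mem_Ico.2 ⟨by omega, by omega⟩)]
  ring

end SFacts

section Core
open Finset

lemma core (M K : ℕ) (hM : 2 ≤ M) (hK : 1 ≤ K)
    (w : ℂ) (hw : w = Complex.exp (2 * Real.pi * Complex.I / M))
    (σ : ℕ → ℕ) (hσ : Set.BijOn σ (Set.Iio K) (Set.Iio K))
    (μ : Fin M → Fin M → ℕ → ℕ)
    (hμ : ∀ r s : Fin M, ∀ n : ℕ,
      μ r s n = (r : ℕ) * dig M (σ 0) n +
        (∑ k ∈ Finset.Ico 1 K, dig M (σ (k - 1)) n * dig M (σ k) n) +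
        dig M (σ (K - 1)) n * (s : ℕ))
    (x : Fin M → Fin M → ℤ → ℂ)
    (hx : ∀ r s : Fin M, ∀ n : ℤ,
      x r s n = if 0 ≤ n ∧ n < (M ^ K : ℕ) then w ^ (μ r s n.toNat) else 0)
    (r r' : Fin M) (k : ℤ) (hrk : r ≠ r' ∨ k ≠ 0) :
    ∑ s : Fin M, ∑ n ∈ Finset.Ico (0 : ℤ) ((M ^ K : ℕ) : ℤ),
      (starRingEnd ℂ) (x r s n) * x r' s (n + k) = 0 := by
  have hM0 : 0 < M := by omega
  have hK0 : 0 < K := hK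
  haveI : NeZero M := ⟨by omega⟩
  have hMne : M ≠ 0 := by omega
  have hprim : IsPrimitiveRoot w M := by
    rw [hw]; exact Complex.isPrimitiveRoot_exp M hMne
  have hw0 : w ≠ 0 := hprim.ne_zero hMne
  have habs : ‖w‖ = 1 := by
    rw [hw]
    have : 2 * (Real.pi : ℂ) * Complex.I / M = ((2 * Real.pi / M : ℝ) : ℂ) * Complex.I := by
      push_cast; ring
    rw [this, Complex.norm_exp_ofReal_mul_I]
  have hconj : (starRingEnd ℂ) w = w⁻¹ := by
    apply eq_inv_of_mul_eq_one_left
    rw [mul_comm, Complex.mul_conj, Complex.normSq_eq_norm_sq, habs]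
    norm_num
  have hσlt : ∀ i, i < K → σ i < K := fun i hi => hσ.mapsTo hi
  -- link μ with expo
  have hμe : ∀ (r'' s : Fin M) (n : ℕ), n < M ^ K →
      μ r'' s n = expo σ (r'' : ℕ) (dec hM0 K n) (s : ℕ) := by
    intro r'' s n hn
    rw [hμ]
    have hd : ∀ q, q < K → ext (dec hM0 K n) q = dig M q n := by
      intro q hq; rw [ext_eq _ hq]; rfl
    unfold expo
    rw [hd (σ 0) (hσlt 0 hK0), hd (σ (K - 1)) (hσlt _ (by omega))]
    congr 1
    congr 1
    apply Finset.sum_congr rfl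
    intro m hm
    obtain ⟨h1, h2⟩ := Finset.mem_Ico.1 hm
    rw [hd (σ (m - 1)) (hσlt _ (by omega)), hd (σ m) (hσlt _ h2)]
  -- x as a filtered sum
  have hxval : ∀ (r'' s : Fin M) (m : ℤ), x r'' s m =
      ∑ c ∈ Finset.univ.filter (fun c : Fin K → Fin M => ((enc c : ℕ) : ℤ) = m),
        w ^ (expo σ (r'' : ℕ) c (s : ℕ)) := by
    intro r'' s m
    rw [hx]
    by_cases hm : 0 ≤ m ∧ m < ((M ^ K : ℕ) : ℤ)
    · rw [if_pos hm]
      have hmN : m.toNat < M ^ K := by omega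
      have hfilt : Finset.univ.filter (fun c : Fin K → Fin M => ((enc c : ℕ) : ℤ) = m)
          = {dec hM0 K m.toNat} := by
        ext c
        simp only [Finset.mem_filter, Finset.mem_univ, true_and, Finset.mem_singleton]
        constructor
        · intro h
          have henc : enc c = m.toNat := by omega
          rw [← henc, dec_enc hM0]
        · rintro rfl
          rw [enc_dec hM0 hmN]
          omega
      rw [hfilt, Finset.sum_singleton, hμe r'' s m.toNat hmN]
    · rw [if_neg hm]
      have hfilt : Finset.univ.filter (fun c : Fin K → Fin M => ((enc c : ℕ) : ℤ) = m)
          = (∅ : Finset (Fin K → Fin M)) := by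
        ext c
        simp only [Finset.mem_filter, Finset.mem_univ, true_and, Finset.notMem_empty,
          iff_false]
        intro h
        have h2 : ((enc c : ℕ) : ℤ) < ((M ^ K : ℕ) : ℤ) := by
          exact_mod_cast enc_lt hM0 c
        have h1 : (0 : ℤ) ≤ ((enc c : ℕ) : ℤ) := Int.natCast_nonneg _
        exact hm ⟨by omega, by omega⟩
      rw [hfilt, Finset.sum_empty]
  -- conjugated factor at enc b
  have hxenc : ∀ (r'' s : Fin M) (b : Fin K → Fin M),
      (starRingEnd ℂ) (x r'' s ((enc b : ℕ) : ℤ)) =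
        w ^ (-((expo σ (r'' : ℕ) b (s : ℕ) : ℕ) : ℤ)) := by
    intro r'' s b
    rw [hx, if_pos ⟨Int.natCast_nonneg _, by exact_mod_cast enc_lt hM0 b⟩,
      Int.toNat_natCast, hμe r'' s (enc b) (enc_lt hM0 b), dec_enc hM0,
      map_pow, hconj, inv_pow, ← zpow_natCast w, ← zpow_neg]
  -- reindex the n-sum by digit vectors
  have step1 : ∀ s : Fin M,
      ∑ n ∈ Finset.Ico (0 : ℤ) ((M ^ K : ℕ) : ℤ), (starRingEnd ℂ) (x r s n) * x r' s (n + k)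
      = ∑ b : Fin K → Fin M,
          (starRingEnd ℂ) (x r s ((enc b : ℕ) : ℤ)) * x r' s (((enc b : ℕ) : ℤ) + k) := by
    intro s
    have hleft : ∀ n : ℤ, n ∈ Finset.Ico (0 : ℤ) ((M ^ K : ℕ) : ℤ) →
        ((enc (dec hM0 K n.toNat) : ℕ) : ℤ) = n := by
      intro n hn
      obtain ⟨h1, h2⟩ := Finset.mem_Ico.1 hn
      have : n.toNat < M ^ K := by omega
      rw [enc_dec hM0 this]
      omega
    apply Finset.sum_nbij' (fun n => dec hM0 K n.toNat) (fun b => ((enc b : ℕ) : ℤ))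
    · exact fun n _ => Finset.mem_univ _
    · intro b _
      refine Finset.mem_Ico.2 ⟨Int.natCast_nonneg _, ?_⟩
      exact_mod_cast enc_lt hM0 b
    · intro n hn
      exact hleft n hn
    · intro b _
      rw [Int.toNat_natCast, dec_enc hM0]
    · intro n hn
      rw [hleft n hn]
  rw [Finset.sum_congr rfl (fun s _ => step1 s)]
  -- expand both factors and merge into a pair sum
  have step2 : ∀ s : Fin M, ∀ b : Fin K → Fin M,
      (starRingEnd ℂ) (x r s ((enc b : ℕ) : ℤ)) * x r' s (((enc b : ℕ) : ℤ) + k)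
      = ∑ c ∈ Finset.univ.filter
          (fun c : Fin K → Fin M => ((enc c : ℕ) : ℤ) = ((enc b : ℕ) : ℤ) + k),
          w ^ (((expo σ (r' : ℕ) c (s : ℕ) : ℕ) : ℤ) - ((expo σ (r : ℕ) b (s : ℕ) : ℕ) : ℤ)) := by
    intro s b
    rw [hxenc, hxval r' s (((enc b : ℕ) : ℤ) + k), Finset.mul_sum]
    apply Finset.sum_congr rfl
    intro c _
    rw [← zpow_natCast w (expo σ (r' : ℕ) c (s : ℕ)), ← zpow_add₀ hw0]
    congr 1
    ring
  rw [Finset.sum_congr rfl (fun s _ => Finset.sum_congr rfl (fun b _ => step2 s b))]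
  -- merge (b, c) into a sum over pairs
  have hpair : ∀ s : Fin M,
      (∑ b : Fin K → Fin M, ∑ c ∈ Finset.univ.filter
          (fun c : Fin K → Fin M => ((enc c : ℕ) : ℤ) = ((enc b : ℕ) : ℤ) + k),
          w ^ (((expo σ (r' : ℕ) c (s : ℕ) : ℕ) : ℤ) - ((expo σ (r : ℕ) b (s : ℕ) : ℕ) : ℤ)))
      = ∑ p ∈ Finset.univ.filter
          (fun p : (Fin K → Fin M) × (Fin K → Fin M) =>
            ((enc p.2 : ℕ) : ℤ) = ((enc p.1 : ℕ) : ℤ) + k),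
          w ^ (((expo σ (r' : ℕ) p.2 (s : ℕ) : ℕ) : ℤ) - ((expo σ (r : ℕ) p.1 (s : ℕ) : ℕ) : ℤ)) := by
    intro s
    rw [Finset.sum_filter, Fintype.sum_prod_type]
    apply Finset.sum_congr rfl
    intro b _
    rw [Finset.sum_filter]
  rw [Finset.sum_congr rfl (fun s _ => hpair s), Finset.sum_comm]
  set Ap : (Fin K → Fin M) × (Fin K → Fin M) → ℤ := fun p =>
    ((expo σ (r' : ℕ) p.2 0 : ℕ) : ℤ) - ((expo σ (r : ℕ) p.1 0 : ℕ) : ℤ) with hAp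
  set Δf : (Fin K → Fin M) × (Fin K → Fin M) → ℤ := fun p =>
    ((ext p.2 (σ (K - 1)) : ℕ) : ℤ) - ((ext p.1 (σ (K - 1)) : ℕ) : ℤ) with hΔf
  have hsplit : ∀ p : (Fin K → Fin M) × (Fin K → Fin M),
      (∑ s : Fin M, w ^ (((expo σ (r' : ℕ) p.2 (s : ℕ) : ℕ) : ℤ) -
        ((expo σ (r : ℕ) p.1 (s : ℕ) : ℕ) : ℤ)))
      = w ^ Ap p * ∑ s : Fin M, w ^ (Δf p * ((s : ℕ) : ℤ)) := by
    intro p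
    rw [Finset.mul_sum]
    apply Finset.sum_congr rfl
    intro s _
    rw [← zpow_add₀ hw0]
    congr 1
    have e1 : ((expo σ (r' : ℕ) p.2 (s : ℕ) : ℕ) : ℤ)
        = ((expo σ (r' : ℕ) p.2 0 : ℕ) : ℤ) +
          ((ext p.2 (σ (K - 1)) : ℕ) : ℤ) * ((s : ℕ) : ℤ) := by
      exact_mod_cast congrArg (Nat.cast : ℕ → ℤ) (expo_s σ (r' : ℕ) p.2 (s : ℕ))
    have e2 : ((expo σ (r : ℕ) p.1 (s : ℕ) : ℕ) : ℤ)
        = ((expo σ (r : ℕ) p.1 0 : ℕ) : ℤ) +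
          ((ext p.1 (σ (K - 1)) : ℕ) : ℤ) * ((s : ℕ) : ℤ) := by
      exact_mod_cast congrArg (Nat.cast : ℕ → ℤ) (expo_s σ (r : ℕ) p.1 (s : ℕ))
    rw [e1, e2, hAp, hΔf]
    ring
  rw [Finset.sum_congr rfl (fun p _ => hsplit p)]
  rw [← Finset.sum_filter_add_sum_filter_not
    (Finset.univ.filter (fun p : (Fin K → Fin M) × (Fin K → Fin M) => ((enc p.2 : ℕ) : ℤ) = ((enc p.1 : ℕ) : ℤ) + k))
    (fun p => Δf p = 0)]
  have hzero2 : ∑ p ∈ (Finset.univ.filter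
      (fun p : (Fin K → Fin M) × (Fin K → Fin M) => ((enc p.2 : ℕ) : ℤ) = ((enc p.1 : ℕ) : ℤ) + k)).filter
      (fun p => ¬ Δf p = 0), w ^ Ap p * ∑ s : Fin M, w ^ (Δf p * ((s : ℕ) : ℤ)) = 0 := by
    apply Finset.sum_eq_zero
    intro p hp
    have hΔne : Δf p ≠ 0 := (Finset.mem_filter.1 hp).2
    have hdvd : ¬ ((M : ℤ) ∣ Δf p) := by
      intro hd
      apply hΔne
      apply Int.eq_zero_of_abs_lt_dvd hd
      have b1 : ((ext p.2 (σ (K - 1)) : ℕ) : ℤ) < M := by exact_mod_cast ext_lt hM0 p.2 _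
      have b2 : ((ext p.1 (σ (K - 1)) : ℕ) : ℤ) < M := by exact_mod_cast ext_lt hM0 p.1 _
      have b3 : (0 : ℤ) ≤ ((ext p.2 (σ (K - 1)) : ℕ) : ℤ) := Int.natCast_nonneg _
      have b4 : (0 : ℤ) ≤ ((ext p.1 (σ (K - 1)) : ℕ) : ℤ) := Int.natCast_nonneg _
      rw [hΔf, abs_lt]
      constructor <;> simp <;> omega
    rw [zsum hMne hprim hdvd, mul_zero]
  rw [hzero2, add_zero]
  have hSS : (Finset.univ.filter
      (fun p : (Fin K → Fin M) × (Fin K → Fin M) => ((enc p.2 : ℕ) : ℤ) = ((enc p.1 : ℕ) : ℤ) + k)).filter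
      (fun p => Δf p = 0) = Sset σ M K k := by
    ext p
    simp only [Sset, Finset.mem_filter, Finset.mem_univ, true_and, hΔf]
    constructor
    · rintro ⟨h1, h2⟩
      exact ⟨h1, by omega⟩
    · rintro ⟨h1, h2⟩
      exact ⟨h1, by omega⟩
  rw [hSS]
  have hconst : ∀ p ∈ Sset σ M K k,
      w ^ Ap p * ∑ s : Fin M, w ^ (Δf p * ((s : ℕ) : ℤ)) = w ^ Ap p * M := by
    intro p hp
    congr 1
    have hΔ0 : Δf p = 0 := by
      have := (mem_Sset.1 hp).2
      simp only [hΔf]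
      omega
    rw [hΔ0]
    simp [zero_mul, zpow_zero]
  rw [Finset.sum_congr rfl hconst]
  rcases eq_or_ne k 0 with hk0 | hkne
  · -- k = 0 : use the r-digit position σ 0
    subst hk0
    have hr : r ≠ r' := hrk.resolve_right (by simp)
    have heqc : ∀ p ∈ Sset σ M K (0 : ℤ), p.1 = p.2 := by
      intro p hp
      have h1 := (mem_Sset.1 hp).1
      have h2 : enc p.1 = enc p.2 := by omega
      exact enc_injective hM0 h2
    have hσ0K : σ 0 < K := hσlt 0 hK0
    set i0 : Fin K := ⟨σ 0, hσ0K⟩ with hi0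
    have hi0v : (i0 : ℕ) = σ 0 := by rw [hi0]
    apply orbit_sum_zero hMne hprim (Sset σ M K 0)
      (fun t p => (Function.update p.1 i0 t, Function.update p.2 i0 t))
      (fun _ => ((r' : ℕ) : ℤ) - ((r : ℕ) : ℤ))
    · intro p hp t
      have he := heqc p hp
      rw [mem_Sset]
      constructor
      · simp [he]
      · simp [he]
    · intro p hp t t'
      simp only [Function.update_idem]
    · intro p hp t t' h
      have h2 := congrArg (fun z : (Fin K → Fin M) × (Fin K → Fin M) => z.1 i0) h
      simp only [Function.update_self] at h2
      exact h2
    · intro p hp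
      have he := heqc p hp
      refine ⟨p.1 i0, ?_⟩
      have h1 : Function.update p.1 i0 (p.1 i0) = p.1 := Function.update_eq_self _ _
      have h2 : Function.update p.2 i0 (p.1 i0) = p.2 := by
        rw [he]; exact Function.update_eq_self _ _
      simp only [h1, h2]
    · intro p hp t
      have he := heqc p hp
      have key : ∀ u : Fin M,
          Ap (Function.update p.1 i0 u, Function.update p.2 i0 u)
            = (((r' : ℕ) : ℤ) - ((r : ℕ) : ℤ)) * ((u : ℕ) : ℤ) := by
        intro u
        simp only [hAp]
        rw [he]
        unfold expo
        push_cast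
        rw [ext_update, hi0v, if_pos rfl]
        push_cast
        ring
      rw [key t, key 0]
      simp only [Fin.val_zero, Nat.cast_zero, mul_zero, zpow_zero, one_mul]
      rw [zpow_mul]
      ring
    · intro p hp
      intro hd
      have hne : ((r' : ℕ) : ℤ) - ((r : ℕ) : ℤ) ≠ 0 := by
        intro h0
        have hv : (r : ℕ) = (r' : ℕ) := by omega
        exact hr (Fin.val_injective hv)
      apply hne
      apply Int.eq_zero_of_abs_lt_dvd hd
      rw [abs_lt]
      have b1 : ((r : ℕ) : ℤ) < M := by exact_mod_cast r.is_lt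
      have b2 : ((r' : ℕ) : ℤ) < M := by exact_mod_cast r'.is_lt
      have b3 : (0 : ℤ) ≤ ((r : ℕ) : ℤ) := Int.natCast_nonneg _
      have b4 : (0 : ℤ) ≤ ((r' : ℕ) : ℤ) := Int.natCast_nonneg _
      omega
  · -- k ≠ 0 : use the update position σ (maxd + 1)
    apply orbit_sum_zero hMne hprim (Sset σ M K k) (uu σ hK0)
      (fun p => ((ext p.2 (σ (maxd σ p)) : ℕ) : ℤ) - ((ext p.1 (σ (maxd σ p)) : ℕ) : ℤ))
    · intro p hp t
      exact (uu_facts hM0 hK0 hσ hkne hp t).2.1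
    · intro p hp t t'
      have hm := (uu_facts hM0 hK0 hσ hkne hp t').1
      have hpos : posn σ hK0 (uu σ hK0 t' p) = posn σ hK0 p := by
        unfold posn; rw [hm]
      show uu σ hK0 t (uu σ hK0 t' p) = uu σ hK0 t p
      unfold uu at hpos ⊢
      rw [hpos]
      simp only [Function.update_idem]
    · intro p hp t t' h
      have h2 := congrArg
        (fun z : (Fin K → Fin M) × (Fin K → Fin M) => z.1 (posn σ hK0 p)) h
      simp only [uu, Function.update_self] at h2
      exact h2
    · intro p hp
      have hag := (uu_facts hM0 hK0 hσ hkne hp 0).2.2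
      refine ⟨p.1 (posn σ hK0 p), ?_⟩
      show uu σ hK0 _ p = p
      unfold uu
      have h1 : Function.update p.1 (posn σ hK0 p) (p.1 (posn σ hK0 p)) = p.1 :=
        Function.update_eq_self _ _
      have h2 : Function.update p.2 (posn σ hK0 p) (p.1 (posn σ hK0 p)) = p.2 := by
        rw [hag]; exact Function.update_eq_self _ _
      simp only [h1, h2]
    · intro p hp t
      have hA := A_update (k := k) hM0 hK0 hσ hkne hp (r : ℕ) (r' : ℕ) t
      have hkey : Ap (uu σ hK0 t p) = Ap (uu σ hK0 0 p) +
          (((ext p.2 (σ (maxd σ p)) : ℕ) : ℤ) - ((ext p.1 (σ (maxd σ p)) : ℕ) : ℤ))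
            * ((t : ℕ) : ℤ) := by
        simp only [hAp]
        exact hA
      rw [hkey, zpow_add₀ hw0]
      ring
    · intro p hp
      have hdiff := (maxd_facts hM0 hK0 hσ hkne hp).1
      intro hd
      have hz := Int.eq_zero_of_abs_lt_dvd hd (by
        rw [abs_lt]
        have b1 : ((ext p.1 (σ (maxd σ p)) : ℕ) : ℤ) < M := by
          exact_mod_cast ext_lt hM0 p.1 _
        have b2 : ((ext p.2 (σ (maxd σ p)) : ℕ) : ℤ) < M := by
          exact_mod_cast ext_lt hM0 p.2 _
        have b3 : (0 : ℤ) ≤ ((ext p.1 (σ (maxd σ p)) : ℕ) : ℤ) := Int.natCast_nonneg _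
        have b4 : (0 : ℤ) ≤ ((ext p.2 (σ (maxd σ p)) : ℕ) : ℤ) := Int.natCast_nonneg _
        omega)
      apply hdiff
      omega

end Core

end CCC

/-- The DFT-based polyphase standard sequences
`x_s^{(r)}(n) = w^{μ_{r,s}(n)}` with
`μ_{r,s}(n) = r·d_{σ(0)}(n) + ∑_{k=1}^{K-1} d_{σ(k-1)}(n)·d_{σ(k)}(n) + d_{σ(K-1)}(n)·s`
form a complete complementary code: each of the `M` sets (indexed by `r`) is a
complementary set, and distinct sets are mutually orthogonal. -/
theorem dft_standard_sets_form_CCC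
    (M K : ℕ) (hM : 2 ≤ M) (hK : 1 ≤ K)
    (w : ℂ) (hw : w = Complex.exp (2 * Real.pi * Complex.I / M))
    (σ : ℕ → ℕ) (hσ : Set.BijOn σ (Set.Iio K) (Set.Iio K))
    (μ : Fin M → Fin M → ℕ → ℕ)
    (hμ : ∀ r s : Fin M, ∀ n : ℕ,
      μ r s n = (r : ℕ) * dig M (σ 0) n +
        (∑ k ∈ Finset.Ico 1 K, dig M (σ (k - 1)) n * dig M (σ k) n) +
        dig M (σ (K - 1)) n * (s : ℕ))
    (x : Fin M → Fin M → ℤ → ℂ)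
    (hx : ∀ r s : Fin M, ∀ n : ℤ,
      x r s n = if 0 ≤ n ∧ n < (M ^ K : ℕ) then w ^ (μ r s n.toNat) else 0) :
    (∀ r : Fin M, ∀ k : ℤ, k ≠ 0 →
      ∑ s : Fin M, ∑ᶠ n : ℤ, x r s n * (starRingEnd ℂ) (x r s (n + k)) = 0) ∧
    (∀ r r' : Fin M, r ≠ r' → ∀ k : ℤ,
      ∑ s : Fin M, ∑ᶠ n : ℤ, (starRingEnd ℂ) (x r s n) * x r' s (n + k) = 0) := by
  have hxne : ∀ (r s : Fin M) (n : ℤ), x r s n ≠ 0 → 0 ≤ n ∧ n < ((M ^ K : ℕ) : ℤ) := by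
    intro r s n hne
    by_contra hcon
    rw [hx, if_neg hcon] at hne
    exact hne rfl
  have hsupp : ∀ F : ℤ → ℂ, (∀ n, F n ≠ 0 → (0 ≤ n ∧ n < ((M ^ K : ℕ) : ℤ))) →
      ∑ᶠ n : ℤ, F n = ∑ n ∈ Finset.Ico (0 : ℤ) ((M ^ K : ℕ) : ℤ), F n := by
    intro F hF
    apply finsum_eq_finset_sum_of_support_subset
    intro n hn
    rw [Finset.coe_Ico]
    exact Set.mem_Ico.2 (hF n hn)
  constructor
  · intro r k hk
    have hcore := CCC.core M K hM hK w hw σ hσ μ hμ x hx r r k (Or.inr hk)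
    have h1 : ∀ s : Fin M, ∑ᶠ n : ℤ, x r s n * (starRingEnd ℂ) (x r s (n + k))
        = ∑ n ∈ Finset.Ico (0 : ℤ) ((M ^ K : ℕ) : ℤ),
            x r s n * (starRingEnd ℂ) (x r s (n + k)) := by
      intro s
      apply hsupp
      intro n hn
      apply hxne r s n
      intro h0
      rw [h0, zero_mul] at hn
      exact hn rfl
    rw [Finset.sum_congr rfl (fun s _ => h1 s)]
    have h2 : ∑ s : Fin M, ∑ n ∈ Finset.Ico (0 : ℤ) ((M ^ K : ℕ) : ℤ),
        x r s n * (starRingEnd ℂ) (x r s (n + k))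
        = (starRingEnd ℂ) (∑ s : Fin M, ∑ n ∈ Finset.Ico (0 : ℤ) ((M ^ K : ℕ) : ℤ),
            (starRingEnd ℂ) (x r s n) * x r s (n + k)) := by
      rw [map_sum]
      apply Finset.sum_congr rfl
      intro s _
      rw [map_sum]
      apply Finset.sum_congr rfl
      intro n _
      rw [map_mul, Complex.conj_conj]
    rw [h2, hcore, map_zero]
  · intro r r' hr k
    have hcore := CCC.core M K hM hK w hw σ hσ μ hμ x hx r r' k (Or.inl hr)
    have h1 : ∀ s : Fin M, ∑ᶠ n : ℤ, (starRingEnd ℂ) (x r s n) * x r' s (n + k)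
        = ∑ n ∈ Finset.Ico (0 : ℤ) ((M ^ K : ℕ) : ℤ),
            (starRingEnd ℂ) (x r s n) * x r' s (n + k) := by
      intro s
      apply hsupp
      intro n hn
      apply hxne r s n
      intro h0
      rw [h0, map_zero, zero_mul] at hn
      exact hn rfl
    rw [Finset.sum_congr rfl (fun s _ => h1 s)]
    exact hcore
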